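/- Let $n\ge 3$, $\eta\in\mathbb{R}^{n-1}$ nonzero, and let $f=(f_{xxxx},f_{xxxy},f_{xxyy},f_{xyyy},f_{yyyy})$ be a symmetric 4-tensor decomposed as above. Suppose: (i) $\langle\hat\eta,f_{xxxy}\rangle=0$, $\iota_{\hat\eta}f_{xxyy}=0$, $\iota_{\hat\eta}f_{xyyy}=0$, $\iota_{\hat\eta}f_{yyyy}=0$, where $\hat\eta=\eta/|\eta|$; and (ii) $f_{xxxx}=0$, and for every unit vector $\hat Y$ with $\hat Y\cdot\eta=0$: $\langle\hat Y,f_{xxxy}\rangle=0$, $\langle\hat Y^{\otimes 2},f_{xxyy}\rangle=0$, $\langle\hat Y^{\otimes 3},f_{xyyy}\rangle=0$, $\langle\hat Y^{\otimes 4},f_{yyyy}\rangle=0$. Then $f=0$. -/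

import Mathlib

open Finset


namespace TensorAux

variable {m : ℕ}

/-- standard basis vector -/
def ee (a : Fin m) : Fin m → ℝ := fun i => if i = a then 1 else 0

lemma sum_delta (a : Fin m) (g : Fin m → ℝ) : ∑ i, ee a i * g i = g a := by
  simp [ee, ite_mul, Finset.sum_ite_eq']

def S2 (v w : Fin m → ℝ) (f : Fin m → Fin m → ℝ) : ℝ :=
  ∑ a, ∑ b, v a * w b * f a b

def S3 (u v w : Fin m → ℝ) (f : Fin m → Fin m → Fin m → ℝ) : ℝ :=
  ∑ a, ∑ b, ∑ c, u a * v b * w c * f a b c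

def S4 (u v w x : Fin m → ℝ) (f : Fin m → Fin m → Fin m → Fin m → ℝ) : ℝ :=
  ∑ a, ∑ b, ∑ c, ∑ d, u a * v b * w c * x d * f a b c d

section S2
variable {f : Fin m → Fin m → ℝ}

lemma S2_add1 (u u' v : Fin m → ℝ) : S2 (u + u') v f = S2 u v f + S2 u' v f := by
  simp only [S2, Pi.add_apply, ← Finset.sum_add_distrib]
  exact Finset.sum_congr rfl fun a _ => Finset.sum_congr rfl fun b _ => by ring

lemma S2_add2 (u v v' : Fin m → ℝ) : S2 u (v + v') f = S2 u v f + S2 u v' f := by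
  simp only [S2, Pi.add_apply, ← Finset.sum_add_distrib]
  exact Finset.sum_congr rfl fun a _ => Finset.sum_congr rfl fun b _ => by ring

lemma S2_smul1 (r : ℝ) (u v : Fin m → ℝ) : S2 (r • u) v f = r * S2 u v f := by
  simp only [S2, Pi.smul_apply, smul_eq_mul, Finset.mul_sum]
  exact Finset.sum_congr rfl fun a _ => Finset.sum_congr rfl fun b _ => by ring

lemma S2_smul2 (r : ℝ) (u v : Fin m → ℝ) : S2 u (r • v) f = r * S2 u v f := by
  simp only [S2, Pi.smul_apply, smul_eq_mul, Finset.mul_sum]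
  exact Finset.sum_congr rfl fun a _ => Finset.sum_congr rfl fun b _ => by ring

lemma S2_swap (hs : ∀ a b, f a b = f b a) (u v : Fin m → ℝ) : S2 u v f = S2 v u f := by
  rw [S2, S2, Finset.sum_comm]
  refine Finset.sum_congr rfl fun a _ => Finset.sum_congr rfl fun b _ => ?_
  rw [hs b a]; ring

lemma S2_eta1 {η : Fin m → ℝ} (h : ∀ b, ∑ a, η a * f a b = 0) (v : Fin m → ℝ) :
    S2 η v f = 0 := by
  have key : ∀ b, ∑ a, η a * v b * f a b = 0 := fun b => by
    have e : ∑ a, η a * v b * f a b = v b * ∑ a, η a * f a b := by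
      rw [Finset.mul_sum]; exact Finset.sum_congr rfl fun a _ => by ring
    rw [e, h b, mul_zero]
  rw [S2, Finset.sum_comm]
  exact Finset.sum_eq_zero fun b _ => key b

lemma S2_basis (f : Fin m → Fin m → ℝ) (a b : Fin m) : S2 (ee a) (ee b) f = f a b := by
  rw [S2]
  have e1 : ∀ a', (∑ b', ee a a' * ee b b' * f a' b') = ee a a' * f a' b := by
    intro a'
    rw [show (∑ b', ee a a' * ee b b' * f a' b') = ∑ b', ee b b' * (ee a a' * f a' b') from
      Finset.sum_congr rfl fun b' _ => by ring, sum_delta]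
  rw [Finset.sum_congr rfl fun a' _ => e1 a', sum_delta]

lemma polar2 {η : Fin m → ℝ} (hs : ∀ a b, f a b = f b a)
    (H : ∀ y : Fin m → ℝ, (∑ i, y i * η i = 0) → S2 y y f = 0)
    (u v : Fin m → ℝ) (hu : ∑ i, u i * η i = 0) (hv : ∑ i, v i * η i = 0) :
    S2 u v f = 0 := by
  have hmem : ∑ i, (u + v) i * η i = 0 := by
    have e : ∑ i, (u + v) i * η i = (∑ i, u i * η i) + ∑ i, v i * η i := by
      rw [← Finset.sum_add_distrib]
      exact Finset.sum_congr rfl fun i _ => by simp [add_mul]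
    rw [e, hu, hv, add_zero]
  have h1 := H _ hmem
  rw [S2_add1, S2_add2, S2_add2, S2_swap hs v u, H u hu, H v hv] at h1
  linarith

end S2

section S3
variable {f : Fin m → Fin m → Fin m → ℝ}

lemma S3_add1 (u u' v w : Fin m → ℝ) : S3 (u + u') v w f = S3 u v w f + S3 u' v w f := by
  simp only [S3, Pi.add_apply, ← Finset.sum_add_distrib]
  exact Finset.sum_congr rfl fun a _ => Finset.sum_congr rfl fun b _ =>
    Finset.sum_congr rfl fun c _ => by ring

lemma S3_add2 (u v v' w : Fin m → ℝ) : S3 u (v + v') w f = S3 u v w f + S3 u v' w f := by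
  simp only [S3, Pi.add_apply, ← Finset.sum_add_distrib]
  exact Finset.sum_congr rfl fun a _ => Finset.sum_congr rfl fun b _ =>
    Finset.sum_congr rfl fun c _ => by ring

lemma S3_add3 (u v w w' : Fin m → ℝ) : S3 u v (w + w') f = S3 u v w f + S3 u v w' f := by
  simp only [S3, Pi.add_apply, ← Finset.sum_add_distrib]
  exact Finset.sum_congr rfl fun a _ => Finset.sum_congr rfl fun b _ =>
    Finset.sum_congr rfl fun c _ => by ring

lemma S3_smul1 (r : ℝ) (u v w : Fin m → ℝ) : S3 (r • u) v w f = r * S3 u v w f := by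
  simp only [S3, Pi.smul_apply, smul_eq_mul, Finset.mul_sum]
  exact Finset.sum_congr rfl fun a _ => Finset.sum_congr rfl fun b _ =>
    Finset.sum_congr rfl fun c _ => by ring

lemma S3_smul2 (r : ℝ) (u v w : Fin m → ℝ) : S3 u (r • v) w f = r * S3 u v w f := by
  simp only [S3, Pi.smul_apply, smul_eq_mul, Finset.mul_sum]
  exact Finset.sum_congr rfl fun a _ => Finset.sum_congr rfl fun b _ =>
    Finset.sum_congr rfl fun c _ => by ring

lemma S3_smul3 (r : ℝ) (u v w : Fin m → ℝ) : S3 u v (r • w) f = r * S3 u v w f := by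
  simp only [S3, Pi.smul_apply, smul_eq_mul, Finset.mul_sum]
  exact Finset.sum_congr rfl fun a _ => Finset.sum_congr rfl fun b _ =>
    Finset.sum_congr rfl fun c _ => by ring

lemma S3_swap12 (hs : ∀ a b c, f a b c = f b a c) (u v w : Fin m → ℝ) :
    S3 u v w f = S3 v u w f := by
  rw [S3, S3, Finset.sum_comm]
  refine Finset.sum_congr rfl fun a _ => Finset.sum_congr rfl fun b _ =>
    Finset.sum_congr rfl fun c _ => ?_
  rw [hs b a c]; ring

lemma S3_swap23 (hs : ∀ a b c, f a b c = f a c b) (u v w : Fin m → ℝ) :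
    S3 u v w f = S3 u w v f := by
  rw [S3, S3]
  refine Finset.sum_congr rfl fun a _ => ?_
  rw [Finset.sum_comm]
  refine Finset.sum_congr rfl fun b _ => Finset.sum_congr rfl fun c _ => ?_
  rw [hs a c b]; ring

lemma S3_eta1 {η : Fin m → ℝ} (h : ∀ b c, ∑ a, η a * f a b c = 0) (v w : Fin m → ℝ) :
    S3 η v w f = 0 := by
  have key : ∀ b c, ∑ a, η a * v b * w c * f a b c = 0 := fun b c => by
    have e : ∑ a, η a * v b * w c * f a b c = v b * w c * ∑ a, η a * f a b c := by
      rw [Finset.mul_sum]; exact Finset.sum_congr rfl fun a _ => by ring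
    rw [e, h b c, mul_zero]
  rw [S3, Finset.sum_comm]
  refine Finset.sum_eq_zero fun b _ => ?_
  rw [Finset.sum_comm]
  exact Finset.sum_eq_zero fun c _ => key b c

lemma S3_basis (f : Fin m → Fin m → Fin m → ℝ) (a b c : Fin m) :
    S3 (ee a) (ee b) (ee c) f = f a b c := by
  rw [S3]
  have e1 : ∀ a' b', (∑ c', ee a a' * ee b b' * ee c c' * f a' b' c')
      = ee a a' * ee b b' * f a' b' c := by
    intro a' b'
    rw [show (∑ c', ee a a' * ee b b' * ee c c' * f a' b' c')
        = ∑ c', ee c c' * (ee a a' * ee b b' * f a' b' c') from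
      Finset.sum_congr rfl fun c' _ => by ring, sum_delta]
  have e2 : ∀ a', (∑ b', ∑ c', ee a a' * ee b b' * ee c c' * f a' b' c')
      = ee a a' * f a' b c := by
    intro a'
    rw [Finset.sum_congr rfl fun b' _ => e1 a' b',
      show (∑ b', ee a a' * ee b b' * f a' b' c)
        = ∑ b', ee b b' * (ee a a' * f a' b' c) from
      Finset.sum_congr rfl fun b' _ => by ring, sum_delta]
  rw [Finset.sum_congr rfl fun a' _ => e2 a', sum_delta]

lemma expand3 (hsa : ∀ a b c, f a b c = f b a c) (hsb : ∀ a b c, f a b c = f a c b)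
    (y z : Fin m → ℝ) (t : ℝ) :
    S3 (y + t • z) (y + t • z) (y + t • z) f
      = S3 y y y f + 3*t*S3 y y z f + 3*t^2*S3 y z z f + t^3*S3 z z z f := by
  have e1 : S3 z y y f = S3 y y z f := by rw [S3_swap12 hsa, S3_swap23 hsb]
  have e2 : S3 y z y f = S3 y y z f := by rw [S3_swap23 hsb]
  have e3 : S3 z z y f = S3 y z z f := by rw [S3_swap23 hsb, S3_swap12 hsa]
  have e4 : S3 z y z f = S3 y z z f := by rw [S3_swap12 hsa]
  simp only [S3_add1, S3_add2, S3_add3, S3_smul1, S3_smul2, S3_smul3]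
  rw [e1, e2, e3, e4]; ring

end S3

section S4
variable {f : Fin m → Fin m → Fin m → Fin m → ℝ}

lemma S4_add1 (u u' v w x : Fin m → ℝ) : S4 (u + u') v w x f = S4 u v w x f + S4 u' v w x f := by
  simp only [S4, Pi.add_apply, ← Finset.sum_add_distrib]
  exact Finset.sum_congr rfl fun a _ => Finset.sum_congr rfl fun b _ =>
    Finset.sum_congr rfl fun c _ => Finset.sum_congr rfl fun d _ => by ring

lemma S4_add2 (u v v' w x : Fin m → ℝ) : S4 u (v + v') w x f = S4 u v w x f + S4 u v' w x f := by
  simp only [S4, Pi.add_apply, ← Finset.sum_add_distrib]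
  exact Finset.sum_congr rfl fun a _ => Finset.sum_congr rfl fun b _ =>
    Finset.sum_congr rfl fun c _ => Finset.sum_congr rfl fun d _ => by ring

lemma S4_add3 (u v w w' x : Fin m → ℝ) : S4 u v (w + w') x f = S4 u v w x f + S4 u v w' x f := by
  simp only [S4, Pi.add_apply, ← Finset.sum_add_distrib]
  exact Finset.sum_congr rfl fun a _ => Finset.sum_congr rfl fun b _ =>
    Finset.sum_congr rfl fun c _ => Finset.sum_congr rfl fun d _ => by ring

lemma S4_add4 (u v w x x' : Fin m → ℝ) : S4 u v w (x + x') f = S4 u v w x f + S4 u v w x' f := by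
  simp only [S4, Pi.add_apply, ← Finset.sum_add_distrib]
  exact Finset.sum_congr rfl fun a _ => Finset.sum_congr rfl fun b _ =>
    Finset.sum_congr rfl fun c _ => Finset.sum_congr rfl fun d _ => by ring

lemma S4_smul1 (r : ℝ) (u v w x : Fin m → ℝ) : S4 (r • u) v w x f = r * S4 u v w x f := by
  simp only [S4, Pi.smul_apply, smul_eq_mul, Finset.mul_sum]
  exact Finset.sum_congr rfl fun a _ => Finset.sum_congr rfl fun b _ =>
    Finset.sum_congr rfl fun c _ => Finset.sum_congr rfl fun d _ => by ring

lemma S4_smul2 (r : ℝ) (u v w x : Fin m → ℝ) : S4 u (r • v) w x f = r * S4 u v w x f := by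
  simp only [S4, Pi.smul_apply, smul_eq_mul, Finset.mul_sum]
  exact Finset.sum_congr rfl fun a _ => Finset.sum_congr rfl fun b _ =>
    Finset.sum_congr rfl fun c _ => Finset.sum_congr rfl fun d _ => by ring

lemma S4_smul3 (r : ℝ) (u v w x : Fin m → ℝ) : S4 u v (r • w) x f = r * S4 u v w x f := by
  simp only [S4, Pi.smul_apply, smul_eq_mul, Finset.mul_sum]
  exact Finset.sum_congr rfl fun a _ => Finset.sum_congr rfl fun b _ =>
    Finset.sum_congr rfl fun c _ => Finset.sum_congr rfl fun d _ => by ring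

lemma S4_smul4 (r : ℝ) (u v w x : Fin m → ℝ) : S4 u v w (r • x) f = r * S4 u v w x f := by
  simp only [S4, Pi.smul_apply, smul_eq_mul, Finset.mul_sum]
  exact Finset.sum_congr rfl fun a _ => Finset.sum_congr rfl fun b _ =>
    Finset.sum_congr rfl fun c _ => Finset.sum_congr rfl fun d _ => by ring

lemma S4_swap12 (hs : ∀ a b c d, f a b c d = f b a c d) (u v w x : Fin m → ℝ) :
    S4 u v w x f = S4 v u w x f := by
  rw [S4, S4, Finset.sum_comm]
  refine Finset.sum_congr rfl fun a _ => Finset.sum_congr rfl fun b _ =>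
    Finset.sum_congr rfl fun c _ => Finset.sum_congr rfl fun d _ => ?_
  rw [hs b a c d]; ring

lemma S4_swap23 (hs : ∀ a b c d, f a b c d = f a c b d) (u v w x : Fin m → ℝ) :
    S4 u v w x f = S4 u w v x f := by
  rw [S4, S4]
  refine Finset.sum_congr rfl fun a _ => ?_
  rw [Finset.sum_comm]
  refine Finset.sum_congr rfl fun b _ => Finset.sum_congr rfl fun c _ =>
    Finset.sum_congr rfl fun d _ => ?_
  rw [hs a c b d]; ring

lemma S4_swap34 (hs : ∀ a b c d, f a b c d = f a b d c) (u v w x : Fin m → ℝ) :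
    S4 u v w x f = S4 u v x w f := by
  rw [S4, S4]
  refine Finset.sum_congr rfl fun a _ => Finset.sum_congr rfl fun b _ => ?_
  rw [Finset.sum_comm]
  refine Finset.sum_congr rfl fun c _ => Finset.sum_congr rfl fun d _ => ?_
  rw [hs a b d c]; ring

lemma S4_eta1 {η : Fin m → ℝ} (h : ∀ b c d, ∑ a, η a * f a b c d = 0) (v w x : Fin m → ℝ) :
    S4 η v w x f = 0 := by
  have key : ∀ b c d, ∑ a, η a * v b * w c * x d * f a b c d = 0 := fun b c d => by
    have e : ∑ a, η a * v b * w c * x d * f a b c d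
        = v b * w c * x d * ∑ a, η a * f a b c d := by
      rw [Finset.mul_sum]; exact Finset.sum_congr rfl fun a _ => by ring
    rw [e, h b c d, mul_zero]
  rw [S4, Finset.sum_comm]
  refine Finset.sum_eq_zero fun b _ => ?_
  rw [Finset.sum_comm]
  refine Finset.sum_eq_zero fun c _ => ?_
  rw [Finset.sum_comm]
  exact Finset.sum_eq_zero fun d _ => key b c d

lemma expand4 (hsa : ∀ a b c d, f a b c d = f b a c d) (hsb : ∀ a b c d, f a b c d = f a c b d)
    (hsc : ∀ a b c d, f a b c d = f a b d c) (y z : Fin m → ℝ) (t : ℝ) :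
    S4 (y + t • z) (y + t • z) (y + t • z) (y + t • z) f
      = S4 y y y y f + 4*t*S4 y y y z f + 6*t^2*S4 y y z z f
        + 4*t^3*S4 y z z z f + t^4*S4 z z z z f := by
  have e1 : S4 z y y y f = S4 y y y z f := by
    rw [S4_swap12 hsa, S4_swap23 hsb, S4_swap34 hsc]
  have e2 : S4 y z y y f = S4 y y y z f := by rw [S4_swap23 hsb, S4_swap34 hsc]
  have e3 : S4 y y z y f = S4 y y y z f := by rw [S4_swap34 hsc]
  have e4 : S4 z z y y f = S4 y y z z f := by
    rw [S4_swap23 hsb, S4_swap34 hsc, S4_swap12 hsa, S4_swap23 hsb]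
  have e5 : S4 z y z y f = S4 y y z z f := by
    rw [S4_swap34 hsc, S4_swap12 hsa, S4_swap23 hsb]
  have e6 : S4 z y y z f = S4 y y z z f := by rw [S4_swap12 hsa, S4_swap23 hsb]
  have e7 : S4 y z z y f = S4 y y z z f := by rw [S4_swap34 hsc, S4_swap23 hsb]
  have e8 : S4 y z y z f = S4 y y z z f := by rw [S4_swap23 hsb]
  have e9 : S4 z z z y f = S4 y z z z f := by
    rw [S4_swap34 hsc, S4_swap23 hsb, S4_swap12 hsa]
  have e10 : S4 z z y z f = S4 y z z z f := by rw [S4_swap23 hsb, S4_swap12 hsa]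
  have e11 : S4 z y z z f = S4 y z z z f := by rw [S4_swap12 hsa]
  simp only [S4_add1, S4_add2, S4_add3, S4_add4, S4_smul1, S4_smul2, S4_smul3, S4_smul4]
  rw [e1, e2, e3, e4, e5, e6, e7, e8, e9, e10, e11]; ring

end S4

section Polar
variable {η : Fin m → ℝ}

lemma mem_line {y z : Fin m → ℝ} (hy : ∑ i, y i * η i = 0) (hz : ∑ i, z i * η i = 0)
    (t : ℝ) : ∑ i, (y + t • z) i * η i = 0 := by
  have e : ∑ i, (y + t • z) i * η i = (∑ i, y i * η i) + t * ∑ i, z i * η i := by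
    rw [Finset.mul_sum, ← Finset.sum_add_distrib]
    exact Finset.sum_congr rfl fun i _ => by
      simp only [Pi.add_apply, Pi.smul_apply, smul_eq_mul]; ring
  rw [e, hy, hz]; ring

lemma polar3_diag {f : Fin m → Fin m → Fin m → ℝ}
    (hsa : ∀ a b c, f a b c = f b a c) (hsb : ∀ a b c, f a b c = f a c b)
    (H : ∀ y : Fin m → ℝ, (∑ i, y i * η i = 0) → S3 y y y f = 0)
    (y z : Fin m → ℝ) (hy : ∑ i, y i * η i = 0) (hz : ∑ i, z i * η i = 0) :
    S3 y y z f = 0 := by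
  have h1 := H _ (mem_line hy hz 1)
  have h2 := H _ (mem_line hy hz (-1))
  rw [expand3 hsa hsb] at h1 h2
  have hy0 := H y hy
  have hz0 := H z hz
  rw [hy0, hz0] at h1 h2
  nlinarith [h1, h2]

lemma polar3 {f : Fin m → Fin m → Fin m → ℝ}
    (hsa : ∀ a b c, f a b c = f b a c) (hsb : ∀ a b c, f a b c = f a c b)
    (H : ∀ y : Fin m → ℝ, (∑ i, y i * η i = 0) → S3 y y y f = 0)
    (u v z : Fin m → ℝ) (hu : ∑ i, u i * η i = 0) (hv : ∑ i, v i * η i = 0)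
    (hz : ∑ i, z i * η i = 0) : S3 u v z f = 0 := by
  have key : ∀ p q : Fin m → ℝ, S2 p q (fun a b => ∑ c, f a b c * z c) = S3 p q z f := by
    intro p q
    simp only [S2, S3]
    refine Finset.sum_congr rfl fun a _ => Finset.sum_congr rfl fun b _ => ?_
    rw [Finset.mul_sum]
    exact Finset.sum_congr rfl fun c _ => by ring
  have hgs : ∀ a b, (∑ c, f a b c * z c) = ∑ c, f b a c * z c := fun a b =>
    Finset.sum_congr rfl fun c _ => by rw [hsa]
  have Hg : ∀ y : Fin m → ℝ, (∑ i, y i * η i = 0) →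
      S2 y y (fun a b => ∑ c, f a b c * z c) = 0 := fun y hy => by
    rw [key]; exact polar3_diag hsa hsb H y z hy hz
  have h := polar2 hgs Hg u v hu hv
  rwa [key] at h

lemma polar4_diag {f : Fin m → Fin m → Fin m → Fin m → ℝ}
    (hsa : ∀ a b c d, f a b c d = f b a c d) (hsb : ∀ a b c d, f a b c d = f a c b d)
    (hsc : ∀ a b c d, f a b c d = f a b d c)
    (H : ∀ y : Fin m → ℝ, (∑ i, y i * η i = 0) → S4 y y y y f = 0)
    (y z : Fin m → ℝ) (hy : ∑ i, y i * η i = 0) (hz : ∑ i, z i * η i = 0) :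
    S4 y y y z f = 0 := by
  have h1 := H _ (mem_line hy hz 1)
  have h2 := H _ (mem_line hy hz (-1))
  have h3 := H _ (mem_line hy hz 2)
  rw [expand4 hsa hsb hsc] at h1 h2 h3
  have hy0 := H y hy
  have hz0 := H z hz
  rw [hy0, hz0] at h1 h2 h3
  nlinarith [h1, h2, h3]

lemma polar4 {f : Fin m → Fin m → Fin m → Fin m → ℝ}
    (hsa : ∀ a b c d, f a b c d = f b a c d) (hsb : ∀ a b c d, f a b c d = f a c b d)
    (hsc : ∀ a b c d, f a b c d = f a b d c)
    (H : ∀ y : Fin m → ℝ, (∑ i, y i * η i = 0) → S4 y y y y f = 0)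
    (u v w z : Fin m → ℝ) (hu : ∑ i, u i * η i = 0) (hv : ∑ i, v i * η i = 0)
    (hw : ∑ i, w i * η i = 0) (hz : ∑ i, z i * η i = 0) : S4 u v w z f = 0 := by
  have key : ∀ p q r : Fin m → ℝ,
      S3 p q r (fun a b c => ∑ d, f a b c d * z d) = S4 p q r z f := by
    intro p q r
    simp only [S3, S4]
    refine Finset.sum_congr rfl fun a _ => Finset.sum_congr rfl fun b _ =>
      Finset.sum_congr rfl fun c _ => ?_
    rw [Finset.mul_sum]
    exact Finset.sum_congr rfl fun d _ => by ring
  have hga : ∀ a b c, (∑ d, f a b c d * z d) = ∑ d, f b a c d * z d := fun a b c =>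
    Finset.sum_congr rfl fun d _ => by rw [hsa]
  have hgb : ∀ a b c, (∑ d, f a b c d * z d) = ∑ d, f a c b d * z d := fun a b c =>
    Finset.sum_congr rfl fun d _ => by rw [hsb]
  have Hg : ∀ y : Fin m → ℝ, (∑ i, y i * η i = 0) →
      S3 y y y (fun a b c => ∑ d, f a b c d * z d) = 0 := fun y hy => by
    rw [key]; exact polar4_diag hsa hsb hsc H y z hy hz
  have h := polar3 hga hgb Hg u v w hu hv hw
  rwa [key] at h

end Polar

lemma S4_basis (f : Fin m → Fin m → Fin m → Fin m → ℝ) (a b c d : Fin m) :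
    S4 (ee a) (ee b) (ee c) (ee d) f = f a b c d := by
  rw [S4]
  have e1 : ∀ a' b' c', (∑ d', ee a a' * ee b b' * ee c c' * ee d d' * f a' b' c' d')
      = ee a a' * ee b b' * ee c c' * f a' b' c' d := by
    intro a' b' c'
    rw [show (∑ d', ee a a' * ee b b' * ee c c' * ee d d' * f a' b' c' d')
        = ∑ d', ee d d' * (ee a a' * ee b b' * ee c c' * f a' b' c' d') from
      Finset.sum_congr rfl fun d' _ => by ring, sum_delta]
  have e2 : ∀ a' b', (∑ c', ∑ d', ee a a' * ee b b' * ee c c' * ee d d' * f a' b' c' d')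
      = ee a a' * ee b b' * f a' b' c d := by
    intro a' b'
    rw [Finset.sum_congr rfl fun c' _ => e1 a' b' c',
      show (∑ c', ee a a' * ee b b' * ee c c' * f a' b' c' d)
        = ∑ c', ee c c' * (ee a a' * ee b b' * f a' b' c' d) from
      Finset.sum_congr rfl fun c' _ => by ring, sum_delta]
  have e3 : ∀ a', (∑ b', ∑ c', ∑ d', ee a a' * ee b b' * ee c c' * ee d d' * f a' b' c' d')
      = ee a a' * f a' b c d := by
    intro a'
    rw [Finset.sum_congr rfl fun b' _ => e2 a' b',
      show (∑ b', ee a a' * ee b b' * f a' b' c d)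
        = ∑ b', ee b b' * (ee a a' * f a' b' c d) from
      Finset.sum_congr rfl fun b' _ => by ring, sum_delta]
  rw [Finset.sum_congr rfl fun a' _ => e3 a', sum_delta]

end TensorAux


open TensorAux in
/-- Case 2 (ξ = 0) ellipticity computation at fiber infinity for the local
geodesic ray transform of symmetric 4-tensors (Lemma 2.2). -/
theorem stmt_1 (n : ℕ) (hn : 3 ≤ n)
    (fxxxx : ℝ) (fxxxy : Fin (n-1) → ℝ)
    (fxxyy : Fin (n-1) → Fin (n-1) → ℝ)
    (fxyyy : Fin (n-1) → Fin (n-1) → Fin (n-1) → ℝ)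
    (fyyyy : Fin (n-1) → Fin (n-1) → Fin (n-1) → Fin (n-1) → ℝ)
    (hsym2 : ∀ a b, fxxyy a b = fxxyy b a)
    (hsym3a : ∀ a b c, fxyyy a b c = fxyyy b a c)
    (hsym3b : ∀ a b c, fxyyy a b c = fxyyy a c b)
    (hsym4a : ∀ a b c d, fyyyy a b c d = fyyyy b a c d)
    (hsym4b : ∀ a b c d, fyyyy a b c d = fyyyy a c b d)
    (hsym4c : ∀ a b c d, fyyyy a b c d = fyyyy a b d c)
    (η : Fin (n-1) → ℝ) (hη : η ≠ 0)
    (h1 : ∑ a, η a * fxxxy a = 0)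
    (h2 : ∀ b, ∑ a, η a * fxxyy a b = 0)
    (h3 : ∀ b c, ∑ a, η a * fxyyy a b c = 0)
    (h4 : ∀ b c d, ∑ a, η a * fyyyy a b c d = 0)
    (h0 : fxxxx = 0)
    (h5 : ∀ Y : Fin (n-1) → ℝ, (∑ a, (Y a)^2 = 1) → (∑ a, Y a * η a = 0) →
      (∑ a, Y a * fxxxy a = 0)
      ∧ (∑ a, ∑ b, Y a * Y b * fxxyy a b = 0)
      ∧ (∑ a, ∑ b, ∑ c, Y a * Y b * Y c * fxyyy a b c = 0)
      ∧ (∑ a, ∑ b, ∑ c, ∑ d, Y a * Y b * Y c * Y d * fyyyy a b c d = 0)) :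
    fxxxx = 0 ∧ (∀ a, fxxxy a = 0) ∧ (∀ a b, fxxyy a b = 0)
      ∧ (∀ a b c, fxyyy a b c = 0) ∧ (∀ a b c d, fyyyy a b c d = 0) := by
  classical
  set N : ℝ := ∑ i, η i * η i with hNdef
  have hN : 0 < N := by
    obtain ⟨i, hi⟩ := Function.ne_iff.mp hη
    simp only [Pi.zero_apply] at hi
    exact Finset.sum_pos' (fun j _ => mul_self_nonneg _)
      ⟨i, Finset.mem_univ i, mul_self_pos.mpr hi⟩
  have hN0 : N ≠ 0 := ne_of_gt hN
  set p : Fin (n-1) → Fin (n-1) → ℝ := fun a i => ee a i - η a / N * η i with hpdef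
  have hp : ∀ a, ∑ i, p a i * η i = 0 := by
    intro a
    have e : ∑ i, p a i * η i = (∑ i, ee a i * η i) - η a / N * ∑ i, η i * η i := by
      rw [Finset.mul_sum, ← Finset.sum_sub_distrib]
      exact Finset.sum_congr rfl fun i _ => by simp only [hpdef]; ring
    rw [e, sum_delta a (fun i => η i), ← hNdef]
    field_simp
    ring
  have hea : ∀ a, ee a = p a + (η a / N) • η := by
    intro a; funext i
    simp only [hpdef, Pi.add_apply, Pi.smul_apply, smul_eq_mul]; ring
  -- remove the unit-vector normalization from h5
  have key : ∀ Y : Fin (n-1) → ℝ, (∑ a, Y a * η a = 0) →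
      (∑ a, Y a * fxxxy a = 0)
      ∧ (∑ a, ∑ b, Y a * Y b * fxxyy a b = 0)
      ∧ (∑ a, ∑ b, ∑ c, Y a * Y b * Y c * fxyyy a b c = 0)
      ∧ (∑ a, ∑ b, ∑ c, ∑ d, Y a * Y b * Y c * Y d * fyyyy a b c d = 0) := by
    intro Y hY
    rcases eq_or_ne Y 0 with rfl | hY0
    · refine ⟨?_, ?_, ?_, ?_⟩ <;> simp
    · obtain ⟨i, hi⟩ := Function.ne_iff.mp hY0
      simp only [Pi.zero_apply] at hi
      have hS : 0 < ∑ a, (Y a)^2 :=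
        Finset.sum_pos' (fun j _ => sq_nonneg _)
          ⟨i, Finset.mem_univ i, lt_of_le_of_ne (sq_nonneg _) (Ne.symm (pow_ne_zero 2 hi))⟩
      set s : ℝ := Real.sqrt (∑ a, (Y a)^2) with hsdef
      have hs : 0 < s := Real.sqrt_pos.mpr hS
      have hs0 : s ≠ 0 := ne_of_gt hs
      have hs2 : s^2 = ∑ a, (Y a)^2 := Real.sq_sqrt hS.le
      have hunit : ∑ a, (Y a / s)^2 = 1 := by
        have e : ∑ a, (Y a / s)^2 = (∑ a, (Y a)^2) / s^2 := by
          rw [Finset.sum_div]; exact Finset.sum_congr rfl fun a _ => by rw [div_pow]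
        rw [e, ← hs2, div_self (pow_ne_zero 2 hs0)]
      have hperp : ∑ a, (Y a / s) * η a = 0 := by
        have e : ∑ a, (Y a / s) * η a = (∑ a, Y a * η a) / s := by
          rw [Finset.sum_div]; exact Finset.sum_congr rfl fun a _ => by ring
        rw [e, hY, zero_div]
      obtain ⟨k1, k2, k3, k4⟩ := h5 (fun a => Y a / s) hunit hperp
      have k1' : ∑ a, (Y a / s) * fxxxy a = 0 := k1
      have k2' : ∑ a, ∑ b, (Y a / s) * (Y b / s) * fxxyy a b = 0 := k2
      have k3' : ∑ a, ∑ b, ∑ c, (Y a / s) * (Y b / s) * (Y c / s) * fxyyy a b c = 0 := k3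
      have k4' : ∑ a, ∑ b, ∑ c, ∑ d,
          (Y a / s) * (Y b / s) * (Y c / s) * (Y d / s) * fyyyy a b c d = 0 := k4
      refine ⟨?_, ?_, ?_, ?_⟩
      · have e : ∑ a, Y a * fxxxy a = s * ∑ a, (Y a / s) * fxxxy a := by
          rw [Finset.mul_sum]
          exact Finset.sum_congr rfl fun a _ => by field_simp
        rw [e, k1', mul_zero]
      · have e : ∑ a, ∑ b, Y a * Y b * fxxyy a b
            = s^2 * ∑ a, ∑ b, (Y a / s) * (Y b / s) * fxxyy a b := by
          rw [Finset.mul_sum]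
          refine Finset.sum_congr rfl fun a _ => ?_
          rw [Finset.mul_sum]
          refine Finset.sum_congr rfl fun b _ => ?_
          field_simp
        rw [e, k2', mul_zero]
      · have e : ∑ a, ∑ b, ∑ c, Y a * Y b * Y c * fxyyy a b c
            = s^3 * ∑ a, ∑ b, ∑ c, (Y a / s) * (Y b / s) * (Y c / s) * fxyyy a b c := by
          rw [Finset.mul_sum]
          refine Finset.sum_congr rfl fun a _ => ?_
          rw [Finset.mul_sum]
          refine Finset.sum_congr rfl fun b _ => ?_
          rw [Finset.mul_sum]
          refine Finset.sum_congr rfl fun c _ => ?_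
          field_simp
        rw [e, k3', mul_zero]
      · have e : ∑ a, ∑ b, ∑ c, ∑ d, Y a * Y b * Y c * Y d * fyyyy a b c d
            = s^4 * ∑ a, ∑ b, ∑ c, ∑ d,
              (Y a / s) * (Y b / s) * (Y c / s) * (Y d / s) * fyyyy a b c d := by
          rw [Finset.mul_sum]
          refine Finset.sum_congr rfl fun a _ => ?_
          rw [Finset.mul_sum]
          refine Finset.sum_congr rfl fun b _ => ?_
          rw [Finset.mul_sum]
          refine Finset.sum_congr rfl fun c _ => ?_
          rw [Finset.mul_sum]
          refine Finset.sum_congr rfl fun d _ => ?_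
          field_simp
        rw [e, k4', mul_zero]
  -- degree 1
  have c2 : ∀ a, fxxxy a = 0 := by
    intro a
    have hp1 := (key (p a) (hp a)).1
    have e : fxxxy a = (∑ i, p a i * fxxxy i) + η a / N * ∑ i, η i * fxxxy i := by
      rw [Finset.mul_sum, ← Finset.sum_add_distrib, ← sum_delta a fxxxy]
      exact Finset.sum_congr rfl fun i _ => by simp only [hpdef]; ring
    rw [e, hp1, h1, mul_zero, add_zero]
  -- degree 2
  have hW2 : ∀ y : Fin (n-1) → ℝ, (∑ i, y i * η i = 0) → S2 y y fxxyy = 0 :=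
    fun y hy => (key y hy).2.1
  have hE1 : ∀ v, S2 η v fxxyy = 0 := fun v => S2_eta1 h2 v
  have hE2 : ∀ v, S2 v η fxxyy = 0 := fun v => by rw [S2_swap hsym2]; exact hE1 v
  have c3 : ∀ a b, fxxyy a b = 0 := by
    intro a b
    rw [← S2_basis fxxyy a b, hea a, hea b]
    simp only [S2_add1, S2_add2, S2_smul1, S2_smul2, hE1, hE2, mul_zero, add_zero, zero_add]
    exact polar2 hsym2 hW2 (p a) (p b) (hp a) (hp b)
  -- degree 3
  have hW3 : ∀ y : Fin (n-1) → ℝ, (∑ i, y i * η i = 0) → S3 y y y fxyyy = 0 :=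
    fun y hy => (key y hy).2.2.1
  have hG1 : ∀ v w, S3 η v w fxyyy = 0 := fun v w => S3_eta1 h3 v w
  have hG2 : ∀ u w, S3 u η w fxyyy = 0 := fun u w => by
    rw [S3_swap12 hsym3a]; exact hG1 u w
  have hG3 : ∀ u v, S3 u v η fxyyy = 0 := fun u v => by
    rw [S3_swap23 hsym3b]; exact hG2 u v
  have c4 : ∀ a b c, fxyyy a b c = 0 := by
    intro a b c
    rw [← S3_basis fxyyy a b c, hea a, hea b, hea c]
    simp only [S3_add1, S3_add2, S3_add3, S3_smul1, S3_smul2, S3_smul3,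
      hG1, hG2, hG3, mul_zero, add_zero, zero_add]
    exact polar3 hsym3a hsym3b hW3 (p a) (p b) (p c) (hp a) (hp b) (hp c)
  -- degree 4
  have hW4 : ∀ y : Fin (n-1) → ℝ, (∑ i, y i * η i = 0) → S4 y y y y fyyyy = 0 :=
    fun y hy => (key y hy).2.2.2
  have hF1 : ∀ v w x, S4 η v w x fyyyy = 0 := fun v w x => S4_eta1 h4 v w x
  have hF2 : ∀ u w x, S4 u η w x fyyyy = 0 := fun u w x => by
    rw [S4_swap12 hsym4a]; exact hF1 u w x
  have hF3 : ∀ u v x, S4 u v η x fyyyy = 0 := fun u v x => by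
    rw [S4_swap23 hsym4b]; exact hF2 u v x
  have hF4 : ∀ u v w, S4 u v w η fyyyy = 0 := fun u v w => by
    rw [S4_swap34 hsym4c]; exact hF3 u v w
  have c5 : ∀ a b c d, fyyyy a b c d = 0 := by
    intro a b c d
    rw [← S4_basis fyyyy a b c d, hea a, hea b, hea c, hea d]
    simp only [S4_add1, S4_add2, S4_add3, S4_add4, S4_smul1, S4_smul2, S4_smul3, S4_smul4,
      hF1, hF2, hF3, hF4, mul_zero, add_zero, zero_add]
    exact polar4 hsym4a hsym4b hsym4c hW4 (p a) (p b) (p c) (p d) (hp a) (hp b) (hp c) (hp d)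
  exact ⟨h0, c2, c3, c4, c5⟩
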